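/- Let y be a nondegenerate L² map from D to ℝ^d with polar factorization y = y* ∘ X, where y* has a convex potential and X is a Lebesgue-measure-preserving map of D. Then X can be written X(a) = (∇Φ)(y(a)) for Lebesgue-almost-every a ∈ D, where Φ is a convex Lipschitz-continuous function defined on all of ℝ^d. -/

import Mathlib

open MeasureTheory Set

noncomputable section

/-- `D` is the closure of a bounded connected open set in `ℝ^d`, its boundary is
Lebesgue-negligible, and it has Lebesgue measure `1`. -/
def IsNiceDomain {d : ℕ} (D : Set (EuclideanSpace ℝ (Fin d))) : Prop :=
  (∃ U : Set (EuclideanSpace ℝ (Fin d)),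
      IsOpen U ∧ IsConnected U ∧ Bornology.IsBounded U ∧ D = closure U) ∧
  volume (frontier D) = 0 ∧ volume D = 1

/-- The map `y` belongs to the class `C` of maps with a convex potential. -/
def HasConvexPotential {d : ℕ} (D : Set (EuclideanSpace ℝ (Fin d)))
    (y : EuclideanSpace ℝ (Fin d) → EuclideanSpace ℝ (Fin d)) : Prop :=
  ∃ p : EuclideanSpace ℝ (Fin d) → EReal,
    LowerSemicontinuous p ∧
    (∀ x z : EuclideanSpace ℝ (Fin d), ∀ t : ℝ, 0 ≤ t → t ≤ 1 →
      p (t • x + (1 - t) • z) ≤ (t : EReal) * p x + ((1 - t : ℝ) : EReal) * p z) ∧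
    (∀ᵐ x ∂(volume.restrict D), ∃ f : EuclideanSpace ℝ (Fin d) → ℝ,
      (∀ᶠ z in nhds x, p z = (f z : EReal)) ∧ HasGradientAt f (y x) x)

/-- `y` is nondegenerate: preimages of Lebesgue-negligible sets are negligible (in `D`). -/
def Nondegenerate {d : ℕ} (D : Set (EuclideanSpace ℝ (Fin d)))
    (y : EuclideanSpace ℝ (Fin d) → EuclideanSpace ℝ (Fin d)) : Prop :=
  ∀ N : Set (EuclideanSpace ℝ (Fin d)), volume N = 0 → volume (y ⁻¹' N ∩ D) = 0

/-- A (Borel) Lebesgue-measure-preserving map of `D`. -/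
def MeasurePreservingMapOf {d : ℕ} (D : Set (EuclideanSpace ℝ (Fin d)))
    (X : EuclideanSpace ℝ (Fin d) → EuclideanSpace ℝ (Fin d)) : Prop :=
  Measurable X ∧ MapsTo X D D ∧
    Measure.map X (volume.restrict D) = volume.restrict D

open Filter
open scoped RealInnerProductSpace Topology Gradient

section Helpers

variable {E : Type*} [NormedAddCommGroup E] [InnerProductSpace ℝ E] [CompleteSpace E]


lemma dir_le {f : E → ℝ} {v x u : E} (hg : HasGradientAt f v x) {c t₀ : ℝ} (ht₀ : 0 < t₀)
    (h : ∀ t : ℝ, 0 < t → t < t₀ → f (x + t • u) - f x ≤ t * c) :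
    ⟪v, u⟫ ≤ c := by
  have hL : HasLineDerivAt ℝ f (⟪v, u⟫) x u := by
    have := hg.hasFDerivAt.hasLineDerivAt u
    simpa using this
  have htend : Tendsto (fun t : ℝ => t⁻¹ • (f (x + t • u) - f x)) (𝓝[>] 0) (𝓝 ⟪v, u⟫) :=
    hL.tendsto_slope_zero.mono_left
      (nhdsWithin_mono _ (fun t ht => Set.mem_compl_singleton_iff.2 (ne_of_gt ht)))
  refine le_of_tendsto htend ?_
  filter_upwards [Ioo_mem_nhdsGT_of_mem (Set.left_mem_Ico.2 ht₀)] with t ht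
  have h1 := h t ht.1 ht.2
  rw [smul_eq_mul]
  calc t⁻¹ * (f (x + t • u) - f x) ≤ t⁻¹ * (t * c) :=
        mul_le_mul_of_nonneg_left h1 (inv_nonneg.2 ht.1.le)
  _ = c := inv_mul_cancel_left₀ (ne_of_gt ht.1) c

lemma le_dir {f : E → ℝ} {v x u : E} (hg : HasGradientAt f v x) {c t₀ : ℝ} (ht₀ : 0 < t₀)
    (h : ∀ t : ℝ, 0 < t → t < t₀ → t * c ≤ f (x + t • u) - f x) :
    c ≤ ⟪v, u⟫ := by
  have hL : HasLineDerivAt ℝ f (⟪v, u⟫) x u := by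
    have := hg.hasFDerivAt.hasLineDerivAt u
    simpa using this
  have htend : Tendsto (fun t : ℝ => t⁻¹ • (f (x + t • u) - f x)) (𝓝[>] 0) (𝓝 ⟪v, u⟫) :=
    hL.tendsto_slope_zero.mono_left
      (nhdsWithin_mono _ (fun t ht => Set.mem_compl_singleton_iff.2 (ne_of_gt ht)))
  refine ge_of_tendsto htend ?_
  filter_upwards [Ioo_mem_nhdsGT_of_mem (Set.left_mem_Ico.2 ht₀)] with t ht
  have h1 := h t ht.1 ht.2
  rw [smul_eq_mul]
  calc c = t⁻¹ * (t * c) := (inv_mul_cancel_left₀ (ne_of_gt ht.1) c).symm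
  _ ≤ t⁻¹ * (f (x + t • u) - f x) := mul_le_mul_of_nonneg_left h1 (inv_nonneg.2 ht.1.le)

lemma grad_eq_of_subgrad {f : E → ℝ} {g w x : E} (hg : HasGradientAt f g x)
    (hsub : ∀ z, f x + ⟪w, z - x⟫ ≤ f z) : g = w := by
  have key : ∀ u : E, ⟪w, u⟫ ≤ ⟪g, u⟫ := by
    intro u
    refine le_dir hg (t₀ := 1) one_pos ?_
    intro t ht1 _
    have := hsub (x + t • u)
    have e : ⟪w, (x + t • u) - x⟫ = t * ⟪w, u⟫ := by
      rw [add_sub_cancel_left, real_inner_smul_right]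
    linarith [e ▸ this]
  have h2 : ∀ u : E, ⟪g - w, u⟫ = 0 := by
    intro u
    have ha := key u
    have hb := key (-u)
    rw [inner_neg_right, inner_neg_right] at hb
    rw [inner_sub_left]
    linarith
  have := h2 (g - w)
  rw [inner_self_eq_zero] at this
  exact sub_eq_zero.1 this

lemma subgrad_of_potential {p : E → EReal}
    (hpconv : ∀ x z : E, ∀ t : ℝ, 0 ≤ t → t ≤ 1 →
      p (t • x + (1 - t) • z) ≤ (t : EReal) * p x + ((1 - t : ℝ) : EReal) * p z)
    {x₀ v : E} {f : E → ℝ} (hf : ∀ᶠ z in 𝓝 x₀, p z = (f z : EReal))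
    (hg : HasGradientAt f v x₀) :
    ∀ z, ((f x₀ + ⟪v, z - x₀⟫ : ℝ) : EReal) ≤ p z := by
  intro z
  have hfx₀ : p x₀ = (f x₀ : EReal) := hf.self_of_nhds
  obtain ⟨ε, hε, hball⟩ := Metric.eventually_nhds_iff.1 hf
  set u := z - x₀ with hu
  set t₀ : ℝ := min 1 (ε / (‖u‖ + 1)) with ht₀def
  have ht₀pos : 0 < t₀ := by
    apply lt_min one_pos
    positivity
  have hdist : ∀ t : ℝ, 0 < t → t < t₀ → dist (x₀ + t • u) x₀ < ε := by
    intro t h1 h2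
    have hnu : (0:ℝ) ≤ ‖u‖ := norm_nonneg u
    have h3 : t < ε / (‖u‖ + 1) := lt_of_lt_of_le h2 (min_le_right _ _)
    have : t * (‖u‖ + 1) < ε := by
      rw [← lt_div_iff₀ (by positivity)]
      exact h3
    rw [dist_eq_norm, add_sub_cancel_left, norm_smul, Real.norm_eq_abs, abs_of_pos h1]
    nlinarith
  have key : ∀ t : ℝ, 0 < t → t < t₀ →
      ((f (x₀ + t • u) : ℝ) : EReal) ≤ (t : EReal) * p z + ((1 - t : ℝ) : EReal) * ((f x₀ : ℝ) : EReal) := by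
    intro t h1 h2
    have hconv := hpconv z x₀ t h1.le (h2.le.trans (min_le_left _ _))
    have e : t • z + (1 - t) • x₀ = x₀ + t • u := by
      rw [hu, smul_sub, sub_smul, one_smul]
      abel
    rw [e, hball (hdist t h1 h2), hfx₀] at hconv
    exact hconv
  by_cases htop : p z = ⊤
  · rw [htop]; exact le_top
  have hbot : p z ≠ ⊥ := by
    intro hbot
    have h1 : 0 < t₀ / 2 := by positivity
    have h2 : t₀ / 2 < t₀ := by linarith
    have := key (t₀ / 2) h1 h2
    rw [hbot, EReal.mul_bot_of_pos (by exact_mod_cast h1), ← EReal.coe_mul,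
      EReal.bot_add] at this
    exact (EReal.coe_ne_bot _) (le_bot_iff.1 this)
  obtain ⟨c, hc⟩ : ∃ c : ℝ, p z = (c : EReal) := ⟨(p z).toReal, (EReal.coe_toReal htop hbot).symm⟩
  rw [hc, EReal.coe_le_coe_iff]
  have hreal : ∀ t : ℝ, 0 < t → t < t₀ → f (x₀ + t • u) - f x₀ ≤ t * (c - f x₀) := by
    intro t h1 h2
    have := key t h1 h2
    rw [hc, ← EReal.coe_mul, ← EReal.coe_mul, ← EReal.coe_add, EReal.coe_le_coe_iff] at this
    nlinarith
  have := dir_le hg ht₀pos hreal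
  linarith

end Helpers

/-- **The measure-preserving factor is the gradient of a convex Lipschitz function
composed with `y`.**  If `y = y* ∘ X` is the polar factorization of the nondegenerate `L²`
map `y`, then `X(a) = (∇Φ)(y(a))` for a.e. `a ∈ D`, where `Φ` is a convex Lipschitz
function defined on all of `ℝ^d`. -/
theorem polar_factor_is_gradient
    {d : ℕ} (D : Set (EuclideanSpace ℝ (Fin d))) (hD : IsNiceDomain D)
    (y : EuclideanSpace ℝ (Fin d) → EuclideanSpace ℝ (Fin d))
    (hy : Measurable y) (hyL2 : MemLp y 2 (volume.restrict D))
    (hynd : Nondegenerate D y)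
    -- `ys = y*` : the rearrangement of `y` with convex potential
    (ys : EuclideanSpace ℝ (Fin d) → EuclideanSpace ℝ (Fin d))
    (hysm : Measurable ys) (hysC : HasConvexPotential D ys)
    (hysr : Measure.map ys (volume.restrict D) = Measure.map y (volume.restrict D))
    -- `X` : the measure-preserving factor of the polar factorization `y = y* ∘ X`
    (X : EuclideanSpace ℝ (Fin d) → EuclideanSpace ℝ (Fin d))
    (hX : MeasurePreservingMapOf D X)
    (hfact : ∀ᵐ a ∂(volume.restrict D), y a = ys (X a)) :
    ∃ Φ : EuclideanSpace ℝ (Fin d) → ℝ,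
      ConvexOn ℝ Set.univ Φ ∧ (∃ L : NNReal, LipschitzWith L Φ) ∧
      ∀ᵐ a ∂(volume.restrict D), HasGradientAt Φ (X a) (y a) := by
  classical
  obtain ⟨p, _hlsc, hpconv, hpgrad⟩ := hysC
  obtain ⟨⟨U, _hUo, _hUc, hUb, hDU⟩, _hfr, hDvol⟩ := hD
  have hDclosed : IsClosed D := by rw [hDU]; exact isClosed_closure
  have hDb : Bornology.IsBounded D := by rw [hDU]; exact hUb.closure
  obtain ⟨R, hR⟩ := isBounded_iff_forall_norm_le.1 hDb
  -- pull back the potential property through `X`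
  have hae1 : ∀ᵐ a ∂(volume.restrict D), ∃ f : EuclideanSpace ℝ (Fin d) → ℝ,
      (∀ᶠ z in 𝓝 (X a), p z = (f z : EReal)) ∧ HasGradientAt f (ys (X a)) (X a) := by
    rw [← hX.2.2] at hpgrad
    exact ae_of_ae_map hX.1.aemeasurable hpgrad
  have haemem : ∀ᵐ a ∂(volume.restrict D), a ∈ D := ae_restrict_mem hDclosed.measurableSet
  -- the subgradient property along the graph of (X, y)
  have hae2 : ∀ᵐ a ∂(volume.restrict D), X a ∈ D ∧ ∃ t : ℝ, p (X a) = (t : EReal) ∧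
      ∀ z, ((t + ⟪y a, z - X a⟫ : ℝ) : EReal) ≤ p z := by
    filter_upwards [hae1, hfact, haemem] with a ha hya haD
    obtain ⟨f, hfev, hfg⟩ := ha
    rw [← hya] at hfg
    exact ⟨hX.2.1 haD, f (X a), hfev.self_of_nhds, subgrad_of_potential hpconv hfev hfg⟩
  -- a base point
  have hne : volume.restrict D ≠ 0 := by
    intro h
    have h0 : (volume.restrict D) Set.univ = 0 := by rw [h]; simp
    rw [Measure.restrict_apply_univ, hDvol] at h0
    exact one_ne_zero h0
  haveI : (MeasureTheory.ae (volume.restrict D)).NeBot := ae_neBot.2 hne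
  obtain ⟨a₀, ha₀D, t₀, hpt₀, hsub₀⟩ := hae2.exists
  set S : Set (EuclideanSpace ℝ (Fin d) × ℝ) :=
    {q | q.1 ∈ D ∧ p q.1 = (q.2 : EReal)} with hS
  have hSne : S.Nonempty := ⟨(X a₀, t₀), ha₀D, hpt₀⟩
  have hSbound : ∀ q ∈ S, ∀ x : EuclideanSpace ℝ (Fin d),
      ⟪x, q.1⟫ - q.2 ≤ ‖x - y a₀‖ * R + (⟪y a₀, X a₀⟫ - t₀) := by
    rintro ⟨w, s⟩ ⟨hwD, hws⟩ x
    have h1 : (t₀ + ⟪y a₀, w - X a₀⟫ : ℝ) ≤ s := by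
      have h := hsub₀ w; rw [hws, EReal.coe_le_coe_iff] at h; exact h
    have h2 : ⟪x - y a₀, w⟫ ≤ ‖x - y a₀‖ * R := by
      calc ⟪x - y a₀, w⟫ ≤ ‖x - y a₀‖ * ‖w‖ := real_inner_le_norm _ _
      _ ≤ ‖x - y a₀‖ * R := mul_le_mul_of_nonneg_left (hR w hwD) (norm_nonneg _)
    have e1 : ⟪y a₀, w - X a₀⟫ = ⟪y a₀, w⟫ - ⟪y a₀, X a₀⟫ := inner_sub_right _ _ _
    have e2 : ⟪x - y a₀, w⟫ = ⟪x, w⟫ - ⟪y a₀, w⟫ := inner_sub_left _ _ _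
    simp only at h1 e1 e2 ⊢
    linarith
  set Φ : EuclideanSpace ℝ (Fin d) → ℝ :=
    fun x => sSup ((fun q : EuclideanSpace ℝ (Fin d) × ℝ => ⟪x, q.1⟫ - q.2) '' S) with hΦ
  have hbdd : ∀ x : EuclideanSpace ℝ (Fin d),
      BddAbove ((fun q : EuclideanSpace ℝ (Fin d) × ℝ => ⟪x, q.1⟫ - q.2) '' S) := by
    intro x
    refine ⟨‖x - y a₀‖ * R + (⟪y a₀, X a₀⟫ - t₀), ?_⟩
    rintro r ⟨q, hq, rfl⟩
    exact hSbound q hq x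
  have hmemle : ∀ x : EuclideanSpace ℝ (Fin d), ∀ q ∈ S, ⟪x, q.1⟫ - q.2 ≤ Φ x := fun x q hq =>
    le_csSup (hbdd x) (Set.mem_image_of_mem _ hq)
  have hΦle : ∀ (x : EuclideanSpace ℝ (Fin d)) (M : ℝ),
      (∀ q ∈ S, ⟪x, q.1⟫ - q.2 ≤ M) → Φ x ≤ M := by
    intro x M hM
    refine csSup_le (hSne.image _) ?_
    rintro r ⟨q, hq, rfl⟩
    exact hM q hq
  have hR0 : (0 : ℝ) ≤ R := le_trans (norm_nonneg (X a₀)) (hR _ ha₀D)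
  -- convexity
  have hconvΦ : ConvexOn ℝ Set.univ Φ := by
    refine ⟨convex_univ, fun x _ z _ a b ha hb hab => ?_⟩
    refine hΦle _ _ ?_
    rintro ⟨w, s⟩ hq
    have e : ⟪a • x + b • z, w⟫ - s = a * (⟪x, w⟫ - s) + b * (⟪z, w⟫ - s) := by
      rw [inner_add_left, real_inner_smul_left, real_inner_smul_left]
      linear_combination (s : ℝ) * hab
    rw [e]
    exact add_le_add (mul_le_mul_of_nonneg_left (hmemle x _ hq) ha)
      (mul_le_mul_of_nonneg_left (hmemle z _ hq) hb)
  -- Lipschitz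
  have key : ∀ x z : EuclideanSpace ℝ (Fin d), Φ x - Φ z ≤ R * dist x z := by
    intro x z
    have hxz : Φ x ≤ Φ z + R * dist x z := by
      refine hΦle _ _ ?_
      rintro ⟨w, s⟩ hq
      have h1 : ⟪z, w⟫ - s ≤ Φ z := hmemle z _ hq
      have h2 : ⟪x - z, w⟫ ≤ dist x z * R := by
        calc ⟪x - z, w⟫ ≤ ‖x - z‖ * ‖w‖ := real_inner_le_norm _ _
        _ ≤ ‖x - z‖ * R := mul_le_mul_of_nonneg_left (hR w hq.1) (norm_nonneg _)
        _ = dist x z * R := by rw [dist_eq_norm]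
      have e : ⟪x, w⟫ - s = (⟪z, w⟫ - s) + ⟪x - z, w⟫ := by
        rw [inner_sub_left]; ring
      simp only at h1 h2 e ⊢
      linarith
    linarith
  have hlip : LipschitzWith R.toNNReal Φ := by
    apply LipschitzWith.of_dist_le_mul
    intro x z
    rw [Real.coe_toNNReal R hR0, Real.dist_eq, abs_sub_le_iff]
    constructor
    · exact key x z
    · have := key z x
      rw [dist_comm] at this
      exact this
  -- Rademacher + nondegeneracy
  have hrad : ∀ᵐ x : EuclideanSpace ℝ (Fin d) ∂volume, DifferentiableAt ℝ Φ x :=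
    hlip.ae_differentiableAt
  set N := toMeasurable volume {x : EuclideanSpace ℝ (Fin d) | ¬ DifferentiableAt ℝ Φ x}
    with hN
  have hNnull : volume N = 0 := by
    rw [hN, measure_toMeasurable]
    rw [ae_iff] at hrad
    exact hrad
  have hpre : (volume.restrict D) (y ⁻¹' N) = 0 := by
    rw [Measure.restrict_apply (hy (measurableSet_toMeasurable _ _))]
    exact hynd N hNnull
  have hdiff : ∀ᵐ a ∂(volume.restrict D), DifferentiableAt ℝ Φ (y a) := by
    rw [ae_iff]
    refine measure_mono_null ?_ hpre
    intro a ha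
    exact subset_toMeasurable _ _ ha
  refine ⟨Φ, hconvΦ, ⟨R.toNNReal, hlip⟩, ?_⟩
  filter_upwards [hae2, hdiff] with a ha hda
  obtain ⟨haD, t, hpt, hsub⟩ := ha
  have hg : HasGradientAt Φ (∇ Φ (y a)) (y a) := hda.hasGradientAt
  have hΦval : Φ (y a) = ⟪y a, X a⟫ - t := by
    refine le_antisymm (hΦle _ _ ?_) (hmemle (y a) (X a, t) ⟨haD, hpt⟩)
    rintro ⟨w, s⟩ ⟨hwD, hws⟩
    have h1 : (t + ⟪y a, w - X a⟫ : ℝ) ≤ s := by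
      have h := hsub w; rw [hws, EReal.coe_le_coe_iff] at h; exact h
    have e1 : ⟪y a, w - X a⟫ = ⟪y a, w⟫ - ⟪y a, X a⟫ := inner_sub_right _ _ _
    simp only at h1 e1 ⊢
    linarith
  have hsubΦ : ∀ z, Φ (y a) + ⟪X a, z - y a⟫ ≤ Φ z := by
    intro z
    have h1 : ⟪z, X a⟫ - t ≤ Φ z := hmemle z (X a, t) ⟨haD, hpt⟩
    have e1 : ⟪X a, z - y a⟫ = ⟪z, X a⟫ - ⟪y a, X a⟫ := by
      rw [inner_sub_right, real_inner_comm (X a) z, real_inner_comm (X a) (y a)]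
    rw [hΦval]
    linarith [e1, h1]
  have hgeq : ∇ Φ (y a) = X a := grad_eq_of_subgrad hg hsubΦ
  rw [← hgeq]
  exact hg
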